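/- Let P_F be a forward policy and Z > 0, with state flows F(s) and edge flows F(s→s'). Then for every edge s→s' of G, F(s→s') = P_F(s'|s)·F(s). -/

import Mathlib

open scoped BigOperators Classical

/-- The GFlowNet state space `S = {0,1,⊘}^D`: functions from `Fin D` to `Option Bool`,
with `none` denoting the unspecified entry `⊘`. -/
abbrev GState (D : ℕ) := Fin D → Option Bool

/-- The initial state `s₀`, with all entries `⊘`. -/
def initState (D : ℕ) : GState D := fun _ => none

/-- `s'` is a child of `s` (edge `s → s'` of the DAG `G`): `s'` is obtained from `s`
by changing exactly one `⊘`-entry of `s` to `0` or `1`. -/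
def IsChild {D : ℕ} (s s' : GState D) : Prop :=
  ∃ (i : Fin D) (b : Bool), s i = none ∧ s' = Function.update s i (some b)

/-- Terminal states: no `⊘`-entry. -/
def IsTerminal {D : ℕ} (s : GState D) : Prop := ∀ i, s i ≠ none

/-- The embedding of `X = {0,1}^D` as the set of terminal states. -/
def ofX {D : ℕ} (x : Fin D → Bool) : GState D := fun i => some (x i)

/-- `|s|`: the number of non-`⊘` entries of `s`. -/
def numAssigned {D : ℕ} (s : GState D) : ℕ :=
  (Finset.univ.filter fun i => s i ≠ none).card

/-- A complete trajectory `τ = (t₀ → t₁ → ⋯ → t_n)`, encoded as the list of its states: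
it starts at `s₀`, each consecutive pair is an edge of `G`, and it ends at a terminal state. -/
def IsCompleteTraj {D : ℕ} (l : List (GState D)) : Prop :=
  l.head? = some (initState D) ∧ l.Chain' IsChild ∧
    ∃ s, l.getLast? = some s ∧ IsTerminal s

/-- The trajectory `l` ends at the terminal state corresponding to `x ∈ X`. -/
def EndsAt {D : ℕ} (l : List (GState D)) (x : Fin D → Bool) : Prop :=
  l.getLast? = some (ofX x)

/-- `PF` is a forward policy: for every nonterminal `s`, `PF s ·` is a probability
distribution supported on the children of `s` (`PF s s'` is `P_F(s'|s)`). -/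
def IsForwardPolicy {D : ℕ} (PF : GState D → GState D → ℝ) : Prop :=
  ∀ s : GState D, ¬ IsTerminal s →
    (∀ s', 0 ≤ PF s s') ∧ (∀ s', PF s s' ≠ 0 → IsChild s s') ∧
    (∑ s' : GState D, PF s s' = 1)

/-- `PB` is a backward policy: for every noninitial `s'`, `PB s' ·` is a probability
distribution supported on the parents of `s'` (`PB s' s` is `P_B(s|s')`). -/
def IsBackwardPolicy {D : ℕ} (PB : GState D → GState D → ℝ) : Prop :=
  ∀ s' : GState D, s' ≠ initState D →
    (∀ s, 0 ≤ PB s' s) ∧ (∀ s, PB s' s ≠ 0 → IsChild s s') ∧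
    (∑ s : GState D, PB s' s = 1)

/-- `P_F(τ) = ∏_{i<n} P_F(t_{i+1}|t_i)` along a trajectory. -/
def trajPF {D : ℕ} (PF : GState D → GState D → ℝ) (l : List (GState D)) : ℝ :=
  ((l.zip l.tail).map fun p => PF p.1 p.2).prod

/-- `P_B(τ|x) = ∏_{i<n} P_B(t_i|t_{i+1})` along a trajectory. -/
def trajPB {D : ℕ} (PB : GState D → GState D → ℝ) (l : List (GState D)) : ℝ :=
  ((l.zip l.tail).map fun p => PB p.2 p.1).prod

/-- Trajectory balance for reward `R`: `Z·P_F(τ) = R(x)·P_B(τ|x)` for every complete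
trajectory `τ` ending at `x`. -/
def TrajBalance {D : ℕ} (PF PB : GState D → GState D → ℝ) (Z : ℝ)
    (R : (Fin D → Bool) → ℝ) : Prop :=
  ∀ (l : List (GState D)) (x : Fin D → Bool),
    IsCompleteTraj l → EndsAt l x → Z * trajPF PF l = R x * trajPB PB l

/-- The terminating probability `P_T(x)`: the sum of `P_F(τ)` over all complete
trajectories ending at `x`. -/
noncomputable def PT {D : ℕ} (PF : GState D → GState D → ℝ) (x : Fin D → Bool) : ℝ :=
  ∑ᶠ l ∈ {l : List (GState D) | IsCompleteTraj l ∧ EndsAt l x}, trajPF PF l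

/-- A path in `G` from `s` to `t`, encoded as the list of its states. -/
def IsPath {D : ℕ} (l : List (GState D)) (s t : GState D) : Prop :=
  l.Chain' IsChild ∧ l.head? = some s ∧ l.getLast? = some t
/-- The state flow `F(s)`: sum of `F(τ) = Z·P_F(τ)` over complete trajectories through `s`. -/
noncomputable def stateFlow {D : ℕ} (PF : GState D → GState D → ℝ) (Z : ℝ)
    (s : GState D) : ℝ :=
  ∑ᶠ l ∈ {l : List (GState D) | IsCompleteTraj l ∧ s ∈ l}, Z * trajPF PF l

/-- The edge flow `F(s→s')`: sum of `F(τ) = Z·P_F(τ)` over complete trajectories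
containing the edge `s → s'`. -/
noncomputable def edgeFlow {D : ℕ} (PF : GState D → GState D → ℝ) (Z : ℝ)
    (s s' : GState D) : ℝ :=
  ∑ᶠ l ∈ {l : List (GState D) | IsCompleteTraj l ∧ (s, s') ∈ l.zip l.tail}, Z * trajPF PF l

/-- The Shannon entropy `H[P_F(·|s)]` of the forward policy at `s` (natural log,
with `0·log 0 = 0`). -/
noncomputable def stepEntropyF {D : ℕ} (PF : GState D → GState D → ℝ) (s : GState D) : ℝ :=
  ∑ s' : GState D, Real.negMulLog (PF s s')

/-- The entropy of the flow determined by `P_F`: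
`H[P_F] = Σ_τ P_F(τ) · Σ_{i<n} H[P_F(·|t_i)]`. -/
noncomputable def flowEntropy {D : ℕ} (PF : GState D → GState D → ℝ) : ℝ :=
  ∑ᶠ l ∈ {l : List (GState D) | IsCompleteTraj l},
    trajPF PF l * (l.dropLast.map (stepEntropyF PF)).sum

/-- The uniform backward policy `P_B°(s|s') = 1/|s'|` for each parent `s` of `s'`. -/
noncomputable def uniformBackward (D : ℕ) : GState D → GState D → ℝ :=
  fun s' s => if IsChild s s' then 1 / (numAssigned s' : ℝ) else 0


namespace GFN8
variable {D : ℕ}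

lemma numAssigned_le (s : GState D) : numAssigned s ≤ D := by
  calc (Finset.univ.filter fun i => s i ≠ none).card ≤ Finset.univ.card :=
        Finset.card_filter_le _ _
    _ = D := by simp

lemma IsChild.numAssigned_eq {s s' : GState D} (h : IsChild s s') :
    numAssigned s' = numAssigned s + 1 := by
  obtain ⟨i, b, hs, rfl⟩ := h
  unfold numAssigned
  have hins : (Finset.univ.filter fun j => Function.update s i (some b) j ≠ none)
      = insert i (Finset.univ.filter fun j => s j ≠ none) := by
    ext j
    by_cases hj : j = i
    · subst hj; simp [Function.update_apply]
    · simp [Function.update_apply, hj]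
  rw [hins, Finset.card_insert_of_notMem (by simp [hs])]

lemma IsChild.not_terminal {s s' : GState D} (h : IsChild s s') : ¬ IsTerminal s := by
  obtain ⟨i, b, hs, _⟩ := h
  exact fun ht => ht i hs

lemma nodup_of_chain' {l : List (GState D)} (h : l.Chain' IsChild) : l.Nodup := by
  have h2 : (l.map numAssigned).Chain' (· < ·) := by
    show List.IsChain _ _; rw [List.isChain_map]
    exact List.IsChain.imp (fun a b hab => by rw [IsChild.numAssigned_eq hab]; omega) h
  have h3 := (List.isChain_iff_pairwise).mp h2
  rw [List.pairwise_map] at h3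
  exact h3.imp (fun {a b} hab heq => by simp [heq] at hab)

lemma finite_of_chain' (S : Set (List (GState D))) (hS : ∀ l ∈ S, l.Chain' IsChild) :
    S.Finite := by
  apply Set.Finite.subset (List.finite_length_le (GState D) (Fintype.card (GState D)))
  intro l hl
  exact (nodup_of_chain' (hS l hl)).length_le_card

lemma edges_append {α : Type*} : ∀ (p q : List α) (a b : α), p.getLast? = some a →
    q.head? = some b →
    (p ++ q).zip (p ++ q).tail = p.zip p.tail ++ (a, b) :: q.zip q.tail
  | [], q, a, b, hp, hq => by simp at hp
  | [x], q, a, b, hp, hq => by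
      obtain ⟨c, q', rfl⟩ : ∃ c q', q = c :: q' := by
        cases q with
        | nil => simp at hq
        | cons c q' => exact ⟨c, q', rfl⟩
      simp only [List.getLast?_singleton, Option.some.injEq] at hp
      simp only [List.head?_cons, Option.some.injEq] at hq
      subst hp; subst hq
      rfl
  | x :: y :: p', q, a, b, hp, hq => by
      have hp' : (y :: p').getLast? = some a := by
        rwa [List.getLast?_cons_cons] at hp
      have ih := edges_append (y :: p') q a b hp' hq
      simp only [List.cons_append] at ih ⊢
      rw [show ((x :: y :: (p' ++ q)).zip (x :: y :: (p' ++ q)).tail)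
            = (x, y) :: ((y :: (p' ++ q)).zip (y :: (p' ++ q)).tail) from rfl]
      rw [ih]
      rfl

lemma trajPF_singleton (PF : GState D → GState D → ℝ) (a : GState D) :
    trajPF PF [a] = 1 := rfl

lemma trajPF_cons₂ (PF : GState D → GState D → ℝ) (a b : GState D) (l : List (GState D)) :
    trajPF PF (a :: b :: l) = PF a b * trajPF PF (b :: l) := by
  simp [trajPF]

lemma trajPF_append (PF : GState D → GState D → ℝ) {p q : List (GState D)} {a b : GState D}
    (hp : p.getLast? = some a) (hq : q.head? = some b) :
    trajPF PF (p ++ q) = trajPF PF p * (PF a b * trajPF PF q) := by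
  unfold trajPF
  rw [edges_append p q a b hp hq, List.map_append, List.map_cons, List.prod_append,
    List.prod_cons]

lemma trajPF_append_tail (PF : GState D → GState D → ℝ) {p q : List (GState D)} {a : GState D}
    (hp : p.getLast? = some a) (hq : q.head? = some a) :
    trajPF PF (p ++ q.tail) = trajPF PF p * trajPF PF q := by
  obtain ⟨c, q', rfl⟩ : ∃ c q', q = c :: q' := by
    cases q with
    | nil => simp at hq
    | cons c q' => exact ⟨c, q', rfl⟩
  simp only [List.head?_cons, Option.some.injEq] at hq
  subst hq
  cases q' with
  | nil => simp [trajPF_singleton]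
  | cons b q'' =>
      rw [show (c :: b :: q'').tail = b :: q'' from rfl,
        trajPF_append PF hp (show (b :: q'').head? = some b from rfl),
        trajPF_cons₂]

lemma head?_take {α : Type*} {l : List α} {n : ℕ} (hn : 0 < n) :
    (l.take n).head? = l.head? := by
  cases l <;> cases n <;> simp_all

def PSet (s : GState D) : Set (List (GState D)) := {p | IsPath p (initState D) s}

def QSet (t : GState D) : Set (List (GState D)) :=
  {q | q.Chain' IsChild ∧ q.head? = some t ∧ ∃ u, q.getLast? = some u ∧ IsTerminal u}

lemma finP (s : GState D) : (PSet s).Finite := finite_of_chain' _ (fun _ hl => hl.1)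

lemma finQ (t : GState D) : (QSet t).Finite := finite_of_chain' _ (fun _ hl => hl.1)

lemma finS (s : GState D) : {l : List (GState D) | IsCompleteTraj l ∧ s ∈ l}.Finite :=
  finite_of_chain' _ (fun _ hl => hl.1.2.1)

lemma finE (s s' : GState D) :
    {l : List (GState D) | IsCompleteTraj l ∧ (s, s') ∈ l.zip l.tail}.Finite :=
  finite_of_chain' _ (fun _ hl => hl.1.2.1)

lemma indexOf_eq_of_getElem? {l : List (GState D)} (hnd : l.Nodup) {s : GState D} {n : ℕ}
    (h : l[n]? = some s) : l.idxOf s = n := by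
  have hmem : s ∈ l := List.mem_iff_getElem?.mpr ⟨n, h⟩
  have h1 : l[l.idxOf s]? = some s := List.getElem?_idxOf hmem
  exact List.getElem?_inj (List.idxOf_lt_length_iff.mpr hmem) hnd |>.mp (h1.trans h.symm)

lemma split_state (PF : GState D → GState D → ℝ) {s : GState D} {l : List (GState D)}
    (hl : IsCompleteTraj l) (hs : s ∈ l) :
    l.take (l.idxOf s + 1) ∈ PSet s ∧ l.drop (l.idxOf s) ∈ QSet s ∧
      trajPF PF l = trajPF PF (l.take (l.idxOf s + 1)) * trajPF PF (l.drop (l.idxOf s)) := by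
  obtain ⟨hhead, hchain, u, hlast, hterm⟩ := hl
  set i := l.idxOf s with hi
  have hilt : i < l.length := List.idxOf_lt_length_iff.mpr hs
  have hgi : l[i]? = some s := List.getElem?_idxOf hs
  have hptake : (l.take (i + 1)).getLast? = some s := by
    rw [List.take_succ, hgi]; exact List.getLast?_concat
  have hqhead : (l.drop i).head? = some s := by rw [List.head?_drop]; exact hgi
  have hdne : l.drop i ≠ [] := by
    rw [ne_eq, List.drop_eq_nil_iff]; omega
  have hglue : l.take (i + 1) ++ (l.drop i).tail = l := by
    rw [List.tail_drop, List.take_append_drop]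
  refine ⟨⟨List.IsChain.take hchain _, ?_, hptake⟩, ⟨List.IsChain.drop hchain _, hqhead, u, ?_, hterm⟩, ?_⟩
  · rw [head?_take (Nat.succ_pos _)]; exact hhead
  · rw [← hlast]
    conv_rhs => rw [← List.take_append_drop i l]
    rw [List.getLast?_append_of_ne_nil _ hdne]
  · conv_lhs => rw [← hglue]
    exact trajPF_append_tail PF hptake hqhead

lemma glue_state {s : GState D} {p q : List (GState D)} (hp : p ∈ PSet s) (hq : q ∈ QSet s) :
    (IsCompleteTraj (p ++ q.tail) ∧ s ∈ p ++ q.tail) ∧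
      (p ++ q.tail).take ((p ++ q.tail).idxOf s + 1) = p ∧
      (p ++ q.tail).drop ((p ++ q.tail).idxOf s) = q := by
  obtain ⟨hpc, hph, hpl⟩ := hp
  obtain ⟨hqc, hqh, u, hql, hterm⟩ := hq
  obtain ⟨q', rfl⟩ : ∃ q', q = s :: q' := by
    cases q with
    | nil => simp at hqh
    | cons c q' =>
        simp only [List.head?_cons, Option.some.injEq] at hqh
        subst hqh; exact ⟨q', rfl⟩
  simp only [List.tail_cons]
  have hpne : p ≠ [] := by intro h; rw [h] at hph; simp at hph
  have hple : 0 < p.length := List.length_pos_iff.mpr hpne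
  have hgl : p.getLast hpne = s := by
    have := List.getLast?_eq_getLast hpne
    rw [hpl] at this; exact (Option.some_inj.mp this.symm)
  have hkey : p.dropLast ++ (s :: q') = p ++ q' := by
    conv_rhs => rw [← List.dropLast_append_getLast hpne]
    rw [hgl, List.append_assoc]; rfl
  have hchain : (p ++ q').Chain' IsChild := by
    apply List.IsChain.append hpc (List.IsChain.tail hqc)
    intro x hx y hy
    rw [hpl] at hx; simp at hx; subst hx
    cases q' with
    | nil => simp at hy
    | cons b q'' =>
        simp at hy; subst hy
        exact (List.isChain_cons_cons.mp hqc).1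
  have hmem : s ∈ p ++ q' := List.mem_append_left _ (hgl ▸ List.getLast_mem hpne)
  have hnd : (p ++ q').Nodup := nodup_of_chain' hchain
  have hlat : (p ++ q')[p.length - 1]? = some s := by
    rw [List.getElem?_append]
    simp only [if_pos (by omega : p.length - 1 < p.length)]
    rw [← List.getLast?_eq_getElem?]; exact hpl
  have hidx : (p ++ q').idxOf s = p.length - 1 := indexOf_eq_of_getElem? hnd hlat
  have hsucc : p.length - 1 + 1 = p.length := by omega
  have hhead : (p ++ q').head? = some (initState D) := by
    rw [List.head?_append_of_ne_nil _ hpne]; exact hph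
  have hlast : ∃ v, (p ++ q').getLast? = some v ∧ IsTerminal v := by
    refine ⟨u, ?_, hterm⟩
    cases q' with
    | nil =>
        simp only [List.append_nil]
        simp only [List.getLast?_singleton, Option.some.injEq] at hql
        subst hql; exact hpl
    | cons b q'' =>
        rw [List.getLast?_append_of_ne_nil _ (by simp : (b :: q'') ≠ [])]
        rw [List.getLast?_cons_cons] at hql; exact hql
  refine ⟨⟨⟨hhead, hchain, hlast⟩, hmem⟩, ?_, ?_⟩
  · rw [hidx, hsucc]; exact List.take_left
  · rw [hidx, ← hkey, show p.length - 1 = p.dropLast.length by rw [List.length_dropLast]]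
    exact List.drop_left

lemma split_edge (PF : GState D → GState D → ℝ) {s s' : GState D} {l : List (GState D)}
    (hl : IsCompleteTraj l) (he : (s, s') ∈ l.zip l.tail) :
    l.take (l.idxOf s + 1) ∈ PSet s ∧ l.drop (l.idxOf s + 1) ∈ QSet s' ∧
      trajPF PF l = trajPF PF (l.take (l.idxOf s + 1)) *
        (PF s s' * trajPF PF (l.drop (l.idxOf s + 1))) := by
  obtain ⟨hhead, hchain, u, hlast, hterm⟩ := hl
  have hnd := nodup_of_chain' hchain
  obtain ⟨n, hn⟩ := List.mem_iff_getElem?.mp he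
  rw [List.getElem?_zip_eq_some] at hn
  obtain ⟨hn1, hn2⟩ := hn
  rw [List.getElem?_tail] at hn2
  have hs : s ∈ l := List.mem_iff_getElem?.mpr ⟨n, hn1⟩
  have hidx : l.idxOf s = n := indexOf_eq_of_getElem? hnd hn1
  set i := l.idxOf s with hi
  have hgi : l[i]? = some s := List.getElem?_idxOf hs
  have hgi' : l[i + 1]? = some s' := by rw [hidx]; exact hn2
  have hilt : i + 1 < l.length := by
    by_contra hcon
    rw [List.getElem?_eq_none (by omega)] at hgi'
    exact Option.noConfusion rfl (heq_of_eq hgi')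
  have hptake : (l.take (i + 1)).getLast? = some s := by
    rw [List.take_succ, hgi]; exact List.getLast?_concat
  have hqhead : (l.drop (i + 1)).head? = some s' := by rw [List.head?_drop]; exact hgi'
  have hdne : l.drop (i + 1) ≠ [] := by
    rw [ne_eq, List.drop_eq_nil_iff]; omega
  refine ⟨⟨List.IsChain.take hchain _, ?_, hptake⟩, ⟨List.IsChain.drop hchain _, hqhead, u, ?_, hterm⟩, ?_⟩
  · rw [head?_take (Nat.succ_pos _)]; exact hhead
  · rw [← hlast]
    conv_rhs => rw [← List.take_append_drop (i + 1) l]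
    rw [List.getLast?_append_of_ne_nil _ hdne]
  · conv_lhs => rw [← List.take_append_drop (i + 1) l]
    exact trajPF_append PF hptake hqhead

lemma glue_edge {s s' : GState D} (hss' : IsChild s s') {p q : List (GState D)}
    (hp : p ∈ PSet s) (hq : q ∈ QSet s') :
    (IsCompleteTraj (p ++ q) ∧ (s, s') ∈ (p ++ q).zip (p ++ q).tail) ∧
      (p ++ q).take ((p ++ q).idxOf s + 1) = p ∧
      (p ++ q).drop ((p ++ q).idxOf s + 1) = q := by
  obtain ⟨hpc, hph, hpl⟩ := hp
  obtain ⟨hqc, hqh, u, hql, hterm⟩ := hq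
  have hqne : q ≠ [] := by intro h; rw [h] at hqh; simp at hqh
  have hpne : p ≠ [] := by intro h; rw [h] at hph; simp at hph
  have hple : 0 < p.length := List.length_pos_iff.mpr hpne
  have hchain : (p ++ q).Chain' IsChild := by
    apply List.IsChain.append hpc hqc
    intro x hx y hy
    rw [hpl] at hx; simp at hx; subst hx
    rw [hqh] at hy; simp at hy; subst hy
    exact hss'
  have hnd : (p ++ q).Nodup := nodup_of_chain' hchain
  have hedges : (p ++ q).zip (p ++ q).tail = p.zip p.tail ++ (s, s') :: q.zip q.tail :=
    edges_append p q s s' hpl hqh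
  have hlat : (p ++ q)[p.length - 1]? = some s := by
    rw [List.getElem?_append]
    simp only [if_pos (by omega : p.length - 1 < p.length)]
    rw [← List.getLast?_eq_getElem?]; exact hpl
  have hidx : (p ++ q).idxOf s = p.length - 1 := indexOf_eq_of_getElem? hnd hlat
  have hsucc : p.length - 1 + 1 = p.length := by omega
  refine ⟨⟨⟨?_, hchain, u, ?_, hterm⟩, ?_⟩, ?_, ?_⟩
  · rw [List.head?_append_of_ne_nil _ hpne]; exact hph
  · rw [List.getLast?_append_of_ne_nil _ hqne]; exact hql
  · rw [hedges]
    exact List.mem_append_right _ (List.mem_cons_self)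
  · rw [hidx, hsucc]; exact List.take_left
  · rw [hidx, hsucc]; exact List.drop_left

lemma eq_cons_head {α : Type*} {q : List α} {t : α} (h : q.head? = some t) :
    q = t :: q.tail := by
  cases q with
  | nil => simp at h
  | cons c q' => simp only [List.head?_cons, Option.some.injEq] at h; subst h; rfl

noncomputable def Asum (PF : GState D → GState D → ℝ) (s : GState D) : ℝ :=
  ∑ p ∈ (finP s).toFinset, trajPF PF p

noncomputable def Bsum (PF : GState D → GState D → ℝ) (t : GState D) : ℝ :=
  ∑ q ∈ (finQ t).toFinset, trajPF PF q

lemma stateFlow_factor (PF : GState D → GState D → ℝ) (Z : ℝ) (s : GState D) :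
    stateFlow PF Z s = Z * (Asum PF s * Bsum PF s) := by
  unfold stateFlow
  rw [finsum_mem_eq_finite_toFinset_sum _ (finS s)]
  have key : ∑ l ∈ (finS s).toFinset, Z * trajPF PF l
      = ∑ pq ∈ (finP s).toFinset ×ˢ (finQ s).toFinset,
          Z * (trajPF PF pq.1 * trajPF PF pq.2) := by
    apply Finset.sum_nbij' (i := fun l => (l.take (l.idxOf s + 1), l.drop (l.idxOf s)))
      (j := fun pq => pq.1 ++ pq.2.tail)
    · intro l hl
      rw [Set.Finite.mem_toFinset] at hl
      obtain ⟨h1, h2, _⟩ := split_state PF hl.1 hl.2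
      rw [Finset.mem_product, Set.Finite.mem_toFinset, Set.Finite.mem_toFinset]
      exact ⟨h1, h2⟩
    · intro pq hpq
      rw [Finset.mem_product, Set.Finite.mem_toFinset, Set.Finite.mem_toFinset] at hpq
      rw [Set.Finite.mem_toFinset]
      exact (glue_state hpq.1 hpq.2).1
    · intro l hl
      simp only
      rw [List.tail_drop, List.take_append_drop]
    · intro pq hpq
      rw [Finset.mem_product, Set.Finite.mem_toFinset, Set.Finite.mem_toFinset] at hpq
      obtain ⟨_, h2, h3⟩ := glue_state hpq.1 hpq.2
      exact Prod.ext h2 h3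
    · intro l hl
      rw [Set.Finite.mem_toFinset] at hl
      rw [(split_state PF hl.1 hl.2).2.2]
  rw [key, Finset.sum_product]
  simp only [← Finset.mul_sum]
  rw [← Finset.sum_mul]
  unfold Asum Bsum
  rfl

lemma edgeFlow_factor (PF : GState D → GState D → ℝ) (Z : ℝ) {s s' : GState D}
    (hss' : IsChild s s') :
    edgeFlow PF Z s s' = Z * (Asum PF s * (PF s s' * Bsum PF s')) := by
  unfold edgeFlow
  rw [finsum_mem_eq_finite_toFinset_sum _ (finE s s')]
  have key : ∑ l ∈ (finE s s').toFinset, Z * trajPF PF l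
      = ∑ pq ∈ (finP s).toFinset ×ˢ (finQ s').toFinset,
          Z * (trajPF PF pq.1 * (PF s s' * trajPF PF pq.2)) := by
    apply Finset.sum_nbij' (i := fun l => (l.take (l.idxOf s + 1), l.drop (l.idxOf s + 1)))
      (j := fun pq => pq.1 ++ pq.2)
    · intro l hl
      rw [Set.Finite.mem_toFinset] at hl
      obtain ⟨h1, h2, _⟩ := split_edge PF hl.1 hl.2
      rw [Finset.mem_product, Set.Finite.mem_toFinset, Set.Finite.mem_toFinset]
      exact ⟨h1, h2⟩
    · intro pq hpq
      rw [Finset.mem_product, Set.Finite.mem_toFinset, Set.Finite.mem_toFinset] at hpq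
      rw [Set.Finite.mem_toFinset]
      exact (glue_edge hss' hpq.1 hpq.2).1
    · intro l hl
      simp only
      rw [List.take_append_drop]
    · intro pq hpq
      rw [Finset.mem_product, Set.Finite.mem_toFinset, Set.Finite.mem_toFinset] at hpq
      obtain ⟨_, h2, h3⟩ := glue_edge hss' hpq.1 hpq.2
      exact Prod.ext h2 h3
    · intro l hl
      rw [Set.Finite.mem_toFinset] at hl
      rw [(split_edge PF hl.1 hl.2).2.2]
  rw [key, Finset.sum_product]
  simp only [← Finset.mul_sum]
  rw [← Finset.sum_mul]
  unfold Asum Bsum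
  rfl

lemma terminal_of_numAssigned_ge {t : GState D} (h : D ≤ numAssigned t) : IsTerminal t := by
  have hcard : (Finset.univ.filter fun i => t i ≠ none).card
      = (Finset.univ : Finset (Fin D)).card := by
    have h1 := numAssigned_le t
    unfold numAssigned at h1 h
    rw [Finset.card_univ, Fintype.card_fin]
    omega
  have huniv := Finset.eq_univ_of_card _ hcard
  intro i
  have hmem : i ∈ Finset.univ.filter fun i => t i ≠ none := by
    rw [huniv]; exact Finset.mem_univ i
  exact (Finset.mem_filter.mp hmem).2

lemma Bsum_terminal (PF : GState D → GState D → ℝ) {t : GState D} (ht : IsTerminal t) :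
    Bsum PF t = 1 := by
  have hset : (finQ t).toFinset = {[t]} := by
    ext q
    rw [Set.Finite.mem_toFinset, Finset.mem_singleton]
    constructor
    · rintro ⟨hc, hh, u, hl, hu⟩
      have hq := eq_cons_head hh
      rw [hq]
      cases htl : q.tail with
      | nil => rfl
      | cons b q'' =>
          exfalso
          rw [hq, htl] at hc
          exact IsChild.not_terminal (List.isChain_cons_cons.mp hc).1 ht
    · rintro rfl
      exact ⟨List.isChain_singleton t, rfl, t, rfl, ht⟩
  unfold Bsum
  rw [hset, Finset.sum_singleton, trajPF_singleton]

lemma Bsum_eq_one (PF : GState D → GState D → ℝ) (hPF : IsForwardPolicy PF) :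
    ∀ (n : ℕ) (t : GState D), D - numAssigned t ≤ n → Bsum PF t = 1 := by
  intro n
  induction n with
  | zero =>
      intro t h
      exact Bsum_terminal PF (terminal_of_numAssigned_ge (by omega))
  | succ n ih =>
      intro t h
      by_cases ht : IsTerminal t
      · exact Bsum_terminal PF ht
      · have htlt : numAssigned t < D := by
          by_contra hcon
          exact ht (terminal_of_numAssigned_ge (by omega))
        obtain ⟨hpos, hsupp, hsum⟩ := hPF t ht
        have step1 : Bsum PF t
            = ∑ x ∈ (Finset.univ.filter fun t' => IsChild t t').sigma
                (fun t' => (finQ t').toFinset), PF t x.1 * trajPF PF x.2 := by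
          show (∑ q ∈ (finQ t).toFinset, trajPF PF q) = _
          apply Finset.sum_nbij'
            (i := fun q => (⟨q.tail.headI, q.tail⟩ : Σ _ : GState D, List (GState D)))
            (j := fun x => t :: x.2)
          · intro q hq
            rw [Set.Finite.mem_toFinset] at hq
            obtain ⟨hc, hh, u, hl, hu⟩ := hq
            have hq := eq_cons_head hh
            have htlne : q.tail ≠ [] := by
              intro hnil
              rw [hq, hnil] at hl
              simp only [List.getLast?_singleton, Option.some.injEq] at hl
              exact ht (hl ▸ hu)
            obtain ⟨b, q'', htl⟩ : ∃ b q'', q.tail = b :: q'' := by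
              cases htl : q.tail with
              | nil => exact absurd htl htlne
              | cons b q'' => exact ⟨b, q'', rfl⟩
            rw [Finset.mem_sigma, Finset.mem_filter]
            rw [hq, htl] at hc hl
            rw [List.getLast?_cons_cons] at hl
            refine ⟨⟨Finset.mem_univ _, ?_⟩, ?_⟩
            · rw [htl]; exact (List.isChain_cons_cons.mp hc).1
            · rw [Set.Finite.mem_toFinset, htl]
              exact ⟨(List.isChain_cons_cons.mp hc).2, rfl, u, hl, hu⟩
          · intro x hx
            rw [Finset.mem_sigma, Finset.mem_filter] at hx
            obtain ⟨⟨_, hchild⟩, hq⟩ := hx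
            rw [Set.Finite.mem_toFinset] at hq
            obtain ⟨hc, hh, u, hl, hu⟩ := hq
            rw [Set.Finite.mem_toFinset]
            have hx2 := eq_cons_head hh
            refine ⟨?_, rfl, u, ?_, hu⟩
            · show List.IsChain IsChild (t :: x.2); rw [List.isChain_cons]
              refine ⟨fun y hy => ?_, hc⟩
              rw [hh] at hy
              simp only [Option.mem_def, Option.some.injEq] at hy
              subst hy
              exact hchild
            · rw [hx2, List.getLast?_cons_cons, ← hx2]
              exact hl
          · intro q hq
            rw [Set.Finite.mem_toFinset] at hq
            exact (eq_cons_head hq.2.1).symm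
          · intro x hx
            rw [Finset.mem_sigma, Finset.mem_filter] at hx
            obtain ⟨⟨_, hchild⟩, hq⟩ := hx
            rw [Set.Finite.mem_toFinset] at hq
            have hx2 := eq_cons_head hq.2.1
            have hhd : x.2.headI = x.1 := by rw [hx2]; rfl
            simp only [List.tail_cons]
            rw [show (⟨x.2.headI, x.2⟩ : Σ _ : GState D, List (GState D)) = ⟨x.1, x.2⟩ by
              rw [hhd]]
          · intro q hq
            rw [Set.Finite.mem_toFinset] at hq
            obtain ⟨hc, hh, u, hl, hu⟩ := hq
            have hq1 := eq_cons_head hh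
            have htlne : q.tail ≠ [] := by
              intro hnil
              rw [hq1, hnil] at hl
              simp only [List.getLast?_singleton, Option.some.injEq] at hl
              exact ht (hl ▸ hu)
            have hq2 := eq_cons_head (q := q.tail)
              (t := q.tail.headI) (by
                cases htl : q.tail with
                | nil => exact absurd htl htlne
                | cons b q'' => rfl)
            conv_lhs => rw [hq1, hq2]
            rw [trajPF_cons₂, ← hq2]
        rw [step1, Finset.sum_sigma]
        have step2 : ∀ t' ∈ Finset.univ.filter fun t' => IsChild t t',
            (∑ q ∈ (finQ t').toFinset, PF t t' * trajPF PF q) = PF t t' := by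
          intro t' ht'
          have hchild := (Finset.mem_filter.mp ht').2
          have : Bsum PF t' = 1 := by
            apply ih
            rw [IsChild.numAssigned_eq hchild]
            omega
          rw [← Finset.mul_sum]
          unfold Bsum at this
          rw [this, mul_one]
        rw [Finset.sum_congr rfl step2]
        rw [Finset.sum_filter]
        rw [← hsum]
        apply Finset.sum_congr rfl
        intro t' _
        by_cases hc : IsChild t t'
        · simp [hc]
        · have : PF t t' = 0 := by
            by_contra hne
            exact hc (hsupp t' hne)
          simp [hc, this]

end GFN8

/-- For a forward policy `P_F` and `Z > 0`, the edge flow satisfies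
`F(s→s') = P_F(s'|s)·F(s)` for every edge `s → s'` of `G`. -/
theorem statement8 {D : ℕ} (hD : 1 ≤ D)
    (PF : GState D → GState D → ℝ) (hPF : IsForwardPolicy PF)
    (Z : ℝ) (hZ : 0 < Z)
    (s s' : GState D) (hss' : IsChild s s') :
    edgeFlow PF Z s s' = PF s s' * stateFlow PF Z s := by
  rw [GFN8.edgeFlow_factor PF Z hss', GFN8.stateFlow_factor PF Z s,
    GFN8.Bsum_eq_one PF hPF (D - numAssigned s') s' le_rfl,
    GFN8.Bsum_eq_one PF hPF (D - numAssigned s) s le_rfl]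
  ring
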